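/- Fix positive integers N and D, a finite set X ⊆ [0,1), and a function g : A_N(D) → ℂ. Then there are at most finitely many functions f : ℝ² → ℂ such that: f is a bivariate exponential polynomial with at most N terms, pairwise distinct frequencies in [0,1)², and nonzero polynomial coefficients of degree < D; the projection of the frequency set of f onto the first coordinate equals X; and f(m, n) = g(m, n) for all (m, n) ∈ A_N(D). -/

import Mathlib

/-- The sampling set `A_N(D) = ⋃_{r=1}^{N} [2⌊N/r⌋D]₀ × [2rD]₀ ⊆ ℤ²`
(represented as a finite set of pairs of natural numbers). -/
def sampSet (N D : ℕ) : Finset (ℕ × ℕ) :=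
  (Finset.Icc 1 N).biUnion fun r =>
    Finset.range (2 * (N / r) * D + 1) ×ˢ Finset.range (2 * r * D + 1)

/-- `f : ℝ² → ℂ` is a bivariate exponential polynomial with at most `N` terms, (pairwise
distinct) frequencies given by the finite set `V ⊆ [0,1)²`, and nonzero polynomial coefficients
in which every variable appears with exponent `< D`:
`f(ξ,η) = ∑_{(x,y) ∈ V} p_{(x,y)}(ξ,η) e^{2πi (xξ + yη)}`. -/
def IsExpPoly2 (N D : ℕ) (f : ℝ → ℝ → ℂ) (V : Finset (ℝ × ℝ)) : Prop :=
  ∃ p : ℝ × ℝ → MvPolynomial (Fin 2) ℂ,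
    V.card ≤ N ∧
    (∀ v ∈ V, v.1 ∈ Set.Ico (0 : ℝ) 1 ∧ v.2 ∈ Set.Ico (0 : ℝ) 1) ∧
    (∀ v ∈ V, p v ≠ 0) ∧
    (∀ v ∈ V, ∀ i : Fin 2, (p v).degreeOf i < D) ∧
    ∀ ξ η : ℝ, f ξ η = ∑ v ∈ V, MvPolynomial.eval ![(ξ : ℂ), (η : ℂ)] (p v) *
      Complex.exp (2 * Real.pi * Complex.I * (v.1 * ξ + v.2 * η))


open Polynomial in
theorem lemA (L : ℕ) : ∀ (S : Finset ℝ) (z : ℝ → ℂ) (d : ℝ → ℕ) (q : ℝ → Polynomial ℂ),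
    Set.InjOn z S → (∀ i ∈ S, z i ≠ 0) →
    (∀ i ∈ S, (q i).degree < (d i : ℕ)) →
    (∑ i ∈ S, d i) = L →
    (∀ n : ℕ, n < L → ∑ i ∈ S, (q i).eval (n : ℂ) * z i ^ n = 0) →
    ∀ i ∈ S, q i = 0 := by
  induction L using Nat.strong_induction_on with
  | _ L IH =>
  intro S z d q hinj hz hdeg hsum hvan
  by_cases hall : ∀ i ∈ S, d i = 0
  · intro i hi
    have h0 := hdeg i hi
    rw [hall i hi] at h0
    by_contra hq
    rw [degree_eq_natDegree hq] at h0
    exact absurd h0 (by simp)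
  · push_neg at hall
    obtain ⟨i₀, hi₀S, hd₀⟩ := hall
    have hd₀ : 1 ≤ d i₀ := Nat.one_le_iff_ne_zero.mpr hd₀
    have hL : 1 ≤ L := hsum ▸ le_trans hd₀ (Finset.single_le_sum (by intro i _; positivity) hi₀S)
    by_cases hq₀ : q i₀ = 0
    · -- erase i₀ and recurse
      intro i hi
      rcases eq_or_ne i i₀ with rfl | hne
      · exact hq₀
      have hkey : ∀ i ∈ S.erase i₀, q i = 0 := by
        refine IH (∑ j ∈ S.erase i₀, d j) ?_ _ z d q (hinj.mono (by simp [Finset.erase_subset]))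
          (fun j hj => hz j (Finset.mem_of_mem_erase hj))
          (fun j hj => hdeg j (Finset.mem_of_mem_erase hj)) rfl ?_
        · calc ∑ j ∈ S.erase i₀, d j < d i₀ + ∑ j ∈ S.erase i₀, d j := by omega
            _ = ∑ j ∈ S, d j := Finset.add_sum_erase S d hi₀S
            _ = L := hsum
        · intro n hn
          have hn' : n < L := by
            calc n < ∑ j ∈ S.erase i₀, d j := hn
              _ ≤ ∑ j ∈ S, d j := Finset.sum_le_sum_of_subset (Finset.erase_subset _ _)
              _ = L := hsum
          have := hvan n hn'
          rwa [← Finset.add_sum_erase S _ hi₀S, hq₀, eval_zero, zero_mul, zero_add] at this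
      exact hkey i (Finset.mem_erase.mpr ⟨hne, hi⟩)
    · -- operator step, derive contradiction
      exfalso
      set q₁ : ℝ → Polynomial ℂ := fun i => z i • ((q i).comp (X + 1)) - z i₀ • q i with hq₁def
      set d₁ : ℝ → ℕ := Function.update d i₀ (d i₀ - 1) with hd₁def
      have hnd1 : (X + 1 : Polynomial ℂ).natDegree = 1 := by
        rw [show (X + 1 : Polynomial ℂ) = X + C 1 by rw [map_one], natDegree_X_add_C]
      have hcompdeg : ∀ i : ℝ, ((q i).comp (X + 1)).natDegree = (q i).natDegree := by
        intro i
        rw [natDegree_comp, hnd1, mul_one]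
      have hcomplc : ∀ i : ℝ, ((q i).comp (X + 1)).leadingCoeff = (q i).leadingCoeff := by
        intro i
        rw [leadingCoeff_comp (by rw [hnd1]; norm_num),
          show (X + 1 : Polynomial ℂ) = X + C 1 by rw [map_one],
          (monic_X_add_C (1 : ℂ)).leadingCoeff, one_pow, mul_one]
      have hcompdegle : ∀ i : ℝ, ((q i).comp (X + 1)).degree ≤ (q i).degree := by
        intro i
        by_cases h : q i = 0
        · simp [h]
        · have hc : (q i).comp (X + 1) ≠ 0 := by
            intro hc0
            have := hcomplc i
            rw [hc0, leadingCoeff_zero] at this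
            exact h (leadingCoeff_eq_zero.mp this.symm)
          rw [degree_eq_natDegree h, degree_eq_natDegree hc, hcompdeg i]
      -- degree bounds for q₁
      have hdeg₁ : ∀ i ∈ S, (q₁ i).degree < (d₁ i : ℕ) := by
        intro i hi
        rcases eq_or_ne i i₀ with rfl | hne
        · have hqq : q₁ i = z i • ((q i).comp (X + 1) - q i) := by
            rw [hq₁def, smul_sub]
          have hcne : (q i).comp (X+1) ≠ 0 := by
            intro hc0
            exact absurd (by rw [← hcomplc i, hc0, leadingCoeff_zero] : (q i).leadingCoeff = 0)
                  (leadingCoeff_ne_zero.mpr hq₀)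
          have hdegeq : ((q i).comp (X + 1)).degree = (q i).degree := by
            rw [degree_eq_natDegree hq₀, degree_eq_natDegree hcne, hcompdeg i]
          have hdlt : ((q i).comp (X + 1) - q i).degree < (q i).degree := by
            rw [← hdegeq]
            exact degree_sub_lt hdegeq hcne (hcomplc i)
          have hle : (q i).degree ≤ ((d i - 1 : ℕ) : WithBot ℕ) := by
            rw [degree_eq_natDegree hq₀]
            have := hdeg i hi
            rw [degree_eq_natDegree hq₀] at this
            exact_mod_cast Nat.le_sub_one_of_lt (by exact_mod_cast this)
          rw [hqq, hd₁def, Function.update_self]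
          calc (z i • ((q i).comp (X + 1) - q i)).degree
              ≤ ((q i).comp (X + 1) - q i).degree := degree_smul_le _ _
            _ < (q i).degree := hdlt
            _ ≤ _ := hle
        · rw [hd₁def, Function.update_of_ne hne]
          calc (q₁ i).degree ≤ max (z i • ((q i).comp (X+1))).degree ((z i₀ • q i).degree) :=
              degree_sub_le _ _
            _ ≤ max ((q i).comp (X+1)).degree (q i).degree :=
              max_le_max (degree_smul_le _ _) (degree_smul_le _ _)
            _ ≤ (q i).degree := by rw [max_le_iff]; exact ⟨hcompdegle i, le_refl _⟩
            _ < (d i : ℕ) := hdeg i hi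
      have hsum₁ : ∑ i ∈ S, d₁ i = L - 1 := by
        rw [hd₁def, Finset.sum_update_of_mem hi₀S, Finset.sdiff_singleton_eq_erase, ← hsum,
          ← Finset.add_sum_erase S d hi₀S]
        omega
      have hvan₁ : ∀ n : ℕ, n < L - 1 → ∑ i ∈ S, (q₁ i).eval (n : ℂ) * z i ^ n = 0 := by
        intro n hn
        have e1 : ∀ i, (q₁ i).eval (n : ℂ) * z i ^ n
            = (q i).eval ((n+1 : ℕ) : ℂ) * z i ^ (n+1) - z i₀ * ((q i).eval (n : ℂ) * z i ^ n) := by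
          intro i
          rw [hq₁def]
          simp only [eval_sub, eval_smul, eval_comp, eval_add, eval_X, eval_one, smul_eq_mul]
          push_cast
          ring
        rw [Finset.sum_congr rfl (fun i _ => e1 i), Finset.sum_sub_distrib, ← Finset.mul_sum,
          hvan (n+1) (by omega), hvan n (by omega), mul_zero, sub_zero]
      have hq₁0 := IH (L - 1) (by omega) S z d₁ q₁ hinj hz hdeg₁ hsum₁ hvan₁
      -- for i ≠ i₀, q i = 0
      have hqz : ∀ i ∈ S, i ≠ i₀ → q i = 0 := by
        intro i hi hne
        by_contra hqi
        have h1 : z i • ((q i).comp (X + 1)) = z i₀ • q i := by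
          have := hq₁0 i hi
          rw [hq₁def] at this
          exact sub_eq_zero.mp this
        have h2 := congrArg (fun p => Polynomial.coeff p (q i).natDegree) h1
        simp only [coeff_smul, smul_eq_mul] at h2
        rw [show ((q i).comp (X+1)).coeff (q i).natDegree
            = ((q i).comp (X+1)).leadingCoeff by rw [leadingCoeff, hcompdeg i],
          hcomplc i, coeff_natDegree] at h2
        have hlc : (q i).leadingCoeff ≠ 0 := leadingCoeff_ne_zero.mpr hqi
        have : z i = z i₀ := by
          have h3 : (z i - z i₀) * (q i).leadingCoeff = 0 := by linear_combination h2
          rcases mul_eq_zero.mp h3 with h | h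
          · exact sub_eq_zero.mp h
          · exact absurd h hlc
        exact hne (hinj hi hi₀S this)
      -- now q i₀ has too many roots
      have hroots : ∀ n : ℕ, n < L → (q i₀).eval (n : ℂ) = 0 := by
        intro n hn
        have := hvan n hn
        rw [Finset.sum_eq_single_of_mem i₀ hi₀S
          (fun i hi hne => by rw [hqz i hi hne]; simp)] at this
        rcases mul_eq_zero.mp this with h | h
        · exact h
        · exact absurd h (pow_ne_zero _ (hz i₀ hi₀S))
      apply hq₀
      apply Polynomial.eq_zero_of_natDegree_lt_card_of_eval_eq_zero' (q i₀)
        ((Finset.range L).image (fun n : ℕ => (n : ℂ)))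
      · intro c hc
        obtain ⟨n, hn, rfl⟩ := Finset.mem_image.mp hc
        exact hroots n (Finset.mem_range.mp hn)
      · rw [Finset.card_image_of_injective _ (fun a b h => by exact_mod_cast h), Finset.card_range]
        have := hdeg i₀ hi₀S
        rw [degree_eq_natDegree hq₀] at this
        have : (q i₀).natDegree < d i₀ := by exact_mod_cast this
        have hdL : d i₀ ≤ L := hsum ▸ Finset.single_le_sum (by intro i _; positivity) hi₀S
        omega


noncomputable def toPolyA (P : MvPolynomial (Fin 2) ℂ) (b : ℂ) : Polynomial ℂ :=
  MvPolynomial.aeval ![Polynomial.X, Polynomial.C b] P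

noncomputable def toPolyB (P : MvPolynomial (Fin 2) ℂ) (a : ℂ) : Polynomial ℂ :=
  MvPolynomial.aeval ![Polynomial.C a, Polynomial.X] P

theorem toPolyA_eval (P : MvPolynomial (Fin 2) ℂ) (a b : ℂ) :
    (toPolyA P b).eval a = MvPolynomial.eval ![a, b] P := by
  unfold toPolyA
  rw [← Polynomial.coe_aeval_eq_eval,
    MvPolynomial.comp_aeval_apply (f := ![Polynomial.X, Polynomial.C b]) (Polynomial.aeval a) P]
  have h : (fun i => Polynomial.aeval a (![Polynomial.X, Polynomial.C b] i)) = ![(a:ℂ), b] := by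
    funext i; fin_cases i <;> simp
  rw [h, ← MvPolynomial.coe_aeval_eq_eval]
  rfl

theorem toPolyB_eval (P : MvPolynomial (Fin 2) ℂ) (a b : ℂ) :
    (toPolyB P a).eval b = MvPolynomial.eval ![a, b] P := by
  unfold toPolyB
  rw [← Polynomial.coe_aeval_eq_eval,
    MvPolynomial.comp_aeval_apply (f := ![Polynomial.C a, Polynomial.X]) (Polynomial.aeval b) P]
  have h : (fun i => Polynomial.aeval b (![Polynomial.C a, Polynomial.X] i)) = ![(a:ℂ), b] := by
    funext i; fin_cases i <;> simp
  rw [h, ← MvPolynomial.coe_aeval_eq_eval]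
  rfl

theorem toPolyA_natDegree (P : MvPolynomial (Fin 2) ℂ) (b : ℂ) :
    (toPolyA P b).natDegree ≤ P.degreeOf 0 := by
  unfold toPolyA
  conv_lhs => rw [P.as_sum]
  rw [map_sum]
  apply Polynomial.natDegree_sum_le_of_forall_le
  intro d hd
  rw [MvPolynomial.aeval_monomial]
  have hprod : (d.prod fun i k => (![Polynomial.X, Polynomial.C b] : Fin 2 → Polynomial ℂ) i ^ k)
      = Polynomial.X ^ d 0 * Polynomial.C (b ^ d 1) := by
    rw [Finsupp.prod_fintype _ _ (fun i => pow_zero _), Fin.prod_univ_two]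
    simp [map_pow]
  rw [hprod]
  calc ((algebraMap ℂ (Polynomial ℂ)) (MvPolynomial.coeff d P) *
        (Polynomial.X ^ d 0 * Polynomial.C (b ^ d 1))).natDegree
      ≤ _ := Polynomial.natDegree_mul_le
    _ ≤ d 0 := by
        simp only [Polynomial.algebraMap_eq, Polynomial.natDegree_C, zero_add]
        calc (Polynomial.X ^ d 0 * Polynomial.C (b ^ d 1) : Polynomial ℂ).natDegree
            ≤ _ := Polynomial.natDegree_mul_le
          _ ≤ d 0 := by simp [Polynomial.natDegree_X_pow]
    _ ≤ P.degreeOf 0 := MvPolynomial.monomial_le_degreeOf 0 hd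

theorem toPolyB_natDegree (P : MvPolynomial (Fin 2) ℂ) (a : ℂ) :
    (toPolyB P a).natDegree ≤ P.degreeOf 1 := by
  unfold toPolyB
  conv_lhs => rw [P.as_sum]
  rw [map_sum]
  apply Polynomial.natDegree_sum_le_of_forall_le
  intro d hd
  rw [MvPolynomial.aeval_monomial]
  have hprod : (d.prod fun i k => (![Polynomial.C a, Polynomial.X] : Fin 2 → Polynomial ℂ) i ^ k)
      = Polynomial.C (a ^ d 0) * Polynomial.X ^ d 1 := by
    rw [Finsupp.prod_fintype _ _ (fun i => pow_zero _), Fin.prod_univ_two]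
    simp [map_pow]
  rw [hprod]
  calc ((algebraMap ℂ (Polynomial ℂ)) (MvPolynomial.coeff d P) *
        (Polynomial.C (a ^ d 0) * Polynomial.X ^ d 1)).natDegree
      ≤ _ := Polynomial.natDegree_mul_le
    _ ≤ d 1 := by
        simp only [Polynomial.algebraMap_eq, Polynomial.natDegree_C, zero_add]
        calc (Polynomial.C (a ^ d 0) * Polynomial.X ^ d 1 : Polynomial ℂ).natDegree
            ≤ _ := Polynomial.natDegree_mul_le
          _ ≤ d 1 := by simp [Polynomial.natDegree_X_pow]
    _ ≤ P.degreeOf 1 := MvPolynomial.monomial_le_degreeOf 1 hd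

theorem degree_lt_of_natDegree_lt {p : Polynomial ℂ} {D : ℕ} (h : p.natDegree < D) :
    p.degree < (D : WithBot ℕ) :=
  lt_of_le_of_lt Polynomial.degree_le_natDegree (by exact_mod_cast h)


noncomputable def eF (x : ℝ) : ℂ := Complex.exp (2 * Real.pi * Complex.I * x)

theorem eF_ne_zero (x : ℝ) : eF x ≠ 0 := Complex.exp_ne_zero _

theorem eF_pow (x : ℝ) (m : ℕ) : eF x ^ m = Complex.exp (2 * Real.pi * Complex.I * (x * m)) := by
  rw [eF, ← Complex.exp_nat_mul]
  ring_nf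

theorem eF_inj : Set.InjOn eF (Set.Ico (0:ℝ) 1) := by
  intro x hx y hy h
  rw [eF, eF, Complex.exp_eq_exp_iff_exists_int] at h
  obtain ⟨n, hn⟩ := h
  have h2 : (2 * Real.pi * Complex.I) * (x - y - n) = 0 := by
    linear_combination hn
  have h3 : ((x - y - n : ℝ) : ℂ) = 0 := by
    rcases mul_eq_zero.mp h2 with h | h
    · exfalso
      have : (Real.pi : ℂ) ≠ 0 := by exact_mod_cast Real.pi_ne_zero
      simp [Complex.I_ne_zero, this] at h
    · exact_mod_cast h
  have h4 : x - y = (n : ℝ) := by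
    have := Complex.ofReal_eq_zero.mp h3
    linarith
  have h5 : n = 0 := by
    have h6 : (-1 : ℝ) < n := by
      simp only [Set.mem_Ico] at hx hy
      rw [← h4]; linarith
    have h7 : (n : ℝ) < 1 := by
      simp only [Set.mem_Ico] at hx hy
      rw [← h4]; linarith
    have := (by exact_mod_cast h6 : (-1 : ℤ) < n)
    have := (by exact_mod_cast h7 : n < (1 : ℤ))
    omega
  rw [h5] at h4
  simp at h4
  linarith

theorem samp_arith {N r u : ℕ} (hr1 : 1 ≤ r) (hrN : r ≤ N) (h : u * (2 * r - 1) ≤ 2 * N) :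
    u ≤ 2 * (N / r) := by
  obtain ⟨r', rfl⟩ : ∃ r', r = r' + 1 := ⟨r - 1, by omega⟩
  set q := N / (r' + 1) with hq
  have hq1 : 1 ≤ q := (Nat.one_le_div_iff (by omega)).mpr hrN
  by_contra hu
  push_neg at hu
  have hu' : 2 * q + 1 ≤ u := hu
  have h1 : N < (r' + 1) * (q + 1) := Nat.lt_mul_div_succ N (by omega)
  have h2 : (2 * q + 1) * (2 * r' + 1) ≤ 2 * N := by
    calc (2 * q + 1) * (2 * r' + 1) ≤ u * (2 * r' + 1) := Nat.mul_le_mul_right _ hu'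
      _ = u * (2 * (r' + 1) - 1) := by congr 1
      _ ≤ 2 * N := h
  nlinarith



/-- Given `N`, `D`, a finite set `X ⊆ [0,1)` and prescribed sample values
`g` on the sampling set `A_N(D)`, there are at most finitely many bivariate exponential
polynomials with at most `N` terms, pairwise distinct frequencies in `[0,1)²` and nonzero
coefficients of degree `< D`, whose frequency set projects onto the first coordinate exactly
to `X`, and whose values on `A_N(D)` are given by `g`. -/
theorem exp_poly_finitely_many_given_projection_set (N D : ℕ) (hN : 0 < N) (hD : 0 < D)
    (X : Set ℝ) (hXfin : X.Finite) (hX : X ⊆ Set.Ico (0 : ℝ) 1)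
    (g : ℕ × ℕ → ℂ) :
    {f : ℝ → ℝ → ℂ | ∃ V : Finset (ℝ × ℝ), IsExpPoly2 N D f V ∧
      Prod.fst '' (V : Set (ℝ × ℝ)) = X ∧
      ∀ mn ∈ sampSet N D, f (mn.1 : ℝ) (mn.2 : ℝ) = g mn}.Finite := by
  classical
  apply Set.Subsingleton.finite
  intro f hf f' hf'
  simp only [Set.mem_setOf_eq] at hf hf'
  obtain ⟨V, ⟨p, hVN, hVIco, hpne, hpdeg, hfeq⟩, hVX, hfg⟩ := hf
  obtain ⟨V', ⟨p', hVN', hVIco', hpne', hpdeg', hfeq'⟩, hVX', hfg'⟩ := hf'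
  set W : Finset (ℝ × ℝ) := V ∪ V' with hW
  set P : ℝ × ℝ → MvPolynomial (Fin 2) ℂ :=
    fun v => (if v ∈ V then p v else 0) - (if v ∈ V' then p' v else 0) with hP
  set XF : Finset ℝ := Finset.image Prod.fst W with hXF
  -- basic facts about W, XF
  have hWIco : ∀ v ∈ W, v.1 ∈ Set.Ico (0:ℝ) 1 ∧ v.2 ∈ Set.Ico (0:ℝ) 1 := by
    intro v hv
    rcases Finset.mem_union.mp hv with h | h
    · exact hVIco v h
    · exact hVIco' v h
  have hXFX : (XF : Set ℝ) = X := by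
    rw [hXF, hW, Finset.image_union, Finset.coe_union, Finset.coe_image, Finset.coe_image,
      hVX, hVX', Set.union_self]
  have hXFIco : ∀ x ∈ XF, x ∈ Set.Ico (0:ℝ) 1 := by
    intro x hx
    obtain ⟨v, hv, rfl⟩ := Finset.mem_image.mp hx
    exact (hWIco v hv).1
  -- degree bounds for the difference coefficients
  have hPdegA : ∀ v : ℝ × ℝ, ∀ b : ℂ, (toPolyA (P v) b).degree < (D : WithBot ℕ) := by
    intro v b
    rw [hP]
    show (toPolyA ((if v ∈ V then p v else 0) - (if v ∈ V' then p' v else 0)) b).degree < _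
    unfold toPolyA
    rw [map_sub]
    apply lt_of_le_of_lt (Polynomial.degree_sub_le _ _)
    rw [max_lt_iff]
    constructor
    · apply degree_lt_of_natDegree_lt
      split_ifs with h
      · exact lt_of_le_of_lt (toPolyA_natDegree _ _) (hpdeg v h 0)
      · simpa using hD
    · apply degree_lt_of_natDegree_lt
      split_ifs with h
      · exact lt_of_le_of_lt (toPolyA_natDegree _ _) (hpdeg' v h 0)
      · simpa using hD
  have hPdegB : ∀ v : ℝ × ℝ, ∀ a : ℂ, (toPolyB (P v) a).degree < (D : WithBot ℕ) := by
    intro v a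
    rw [hP]
    show (toPolyB ((if v ∈ V then p v else 0) - (if v ∈ V' then p' v else 0)) a).degree < _
    unfold toPolyB
    rw [map_sub]
    apply lt_of_le_of_lt (Polynomial.degree_sub_le _ _)
    rw [max_lt_iff]
    constructor
    · apply degree_lt_of_natDegree_lt
      split_ifs with h
      · exact lt_of_le_of_lt (toPolyB_natDegree _ _) (hpdeg v h 1)
      · simpa using hD
    · apply degree_lt_of_natDegree_lt
      split_ifs with h
      · exact lt_of_le_of_lt (toPolyB_natDegree _ _) (hpdeg' v h 1)
      · simpa using hD
  -- the fiberwise coefficient function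
  set C : ℝ → ℕ → ℕ → ℂ := fun x m n =>
    ∑ v ∈ W.filter (fun v => Prod.fst v = x),
      MvPolynomial.eval ![(m : ℂ), (n : ℂ)] (P v) * eF v.2 ^ n with hC
  set Qrow : ℝ → ℕ → Polynomial ℂ := fun x n =>
    ∑ v ∈ W.filter (fun v => Prod.fst v = x), toPolyA (P v) (n : ℂ) * Polynomial.C (eF v.2 ^ n)
    with hQrow
  have hQrow_eval : ∀ (x : ℝ) (n m : ℕ), (Qrow x n).eval (m : ℂ) = C x m n := by
    intro x n m
    rw [hQrow, hC]
    simp only [Polynomial.eval_finset_sum, Polynomial.eval_mul, Polynomial.eval_C]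
    exact Finset.sum_congr rfl fun v _ => by rw [toPolyA_eval]
  have hQrow_deg : ∀ (x : ℝ) (n : ℕ), (Qrow x n).degree < (D : WithBot ℕ) := by
    intro x n
    rw [hQrow]
    apply lt_of_le_of_lt (Polynomial.degree_sum_le _ _)
    rw [Finset.sup_lt_iff (by exact WithBot.bot_lt_coe D)]
    intro v _
    calc (toPolyA (P v) (n:ℂ) * Polynomial.C (eF v.2 ^ n)).degree
        ≤ (toPolyA (P v) (n:ℂ)).degree + (Polynomial.C (eF v.2 ^ n)).degree :=
          Polynomial.degree_mul_le _ _
      _ ≤ (toPolyA (P v) (n:ℂ)).degree + 0 := add_le_add le_rfl Polynomial.degree_C_le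
      _ = (toPolyA (P v) (n:ℂ)).degree := add_zero _
      _ < (D : WithBot ℕ) := hPdegA v _
  set ys : ℝ → Finset ℝ := fun x => (W.filter (fun v => Prod.fst v = x)).image Prod.snd with hys
  set t : ℝ → ℕ := fun x => (ys x).card with ht
  have hys_Ico : ∀ x : ℝ, ∀ y ∈ ys x, y ∈ Set.Ico (0:ℝ) 1 := by
    intro x y hy
    obtain ⟨v, hv, rfl⟩ := Finset.mem_image.mp hy
    exact (hWIco v (Finset.mem_filter.mp hv).1).2
  have hC_col : ∀ (x : ℝ) (m n : ℕ), C x m n =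
      ∑ y ∈ ys x, MvPolynomial.eval ![(m:ℂ), (n:ℂ)] (P (x, y)) * eF y ^ n := by
    intro x m n
    rw [hC, hys]
    rw [Finset.sum_image (f := fun y => MvPolynomial.eval ![(m:ℂ), (n:ℂ)] (P (x, y)) * eF y ^ n)]
    · apply Finset.sum_congr rfl
      intro v hv
      have hv1 : v.1 = x := (Finset.mem_filter.mp hv).2
      rw [show ((x : ℝ), v.2) = v from by rw [← hv1]]
    · intro v hv v' hv' hvv
      have h1 : v.1 = x := (Finset.mem_filter.mp hv).2
      have h2 : v'.1 = x := (Finset.mem_filter.mp hv').2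
      exact Prod.ext (h1.trans h2.symm) hvv
  -- key: samples kill the fiberwise sums
  have hkey : ∀ m n : ℕ, (m, n) ∈ sampSet N D → ∑ x ∈ XF, C x m n * eF x ^ m = 0 := by
    intro m n hmn
    have hfib : ∑ x ∈ XF, C x m n * eF x ^ m
        = ∑ v ∈ W, MvPolynomial.eval ![(m:ℂ), (n:ℂ)] (P v) * (eF v.1 ^ m * eF v.2 ^ n) := by
      rw [← Finset.sum_fiberwise_of_maps_to (g := Prod.fst)
        (fun v hv => Finset.mem_image_of_mem Prod.fst hv)]
      apply Finset.sum_congr rfl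
      intro x _
      rw [hC, Finset.sum_mul]
      apply Finset.sum_congr rfl
      intro v hv
      have hv1 : v.1 = x := (Finset.mem_filter.mp hv).2
      rw [hv1]; ring
    have hVpart : ∀ (VV : Finset (ℝ × ℝ)) (pp : ℝ × ℝ → MvPolynomial (Fin 2) ℂ), VV ⊆ W →
        ∑ v ∈ W, MvPolynomial.eval ![(m:ℂ), (n:ℂ)] (if v ∈ VV then pp v else 0) *
          (eF v.1 ^ m * eF v.2 ^ n)
        = ∑ v ∈ VV, MvPolynomial.eval ![(m:ℂ), (n:ℂ)] (pp v) * (eF v.1 ^ m * eF v.2 ^ n) := by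
      intro VV pp hsub
      rw [← Finset.sum_subset hsub]
      · apply Finset.sum_congr rfl
        intro v hv
        rw [if_pos hv]
      · intro v _ hv
        rw [if_neg hv, map_zero, zero_mul]
    have hexp : ∀ (x y ξ η : ℝ), (x * ξ + y * η : ℂ) = (x * ξ + y * η : ℝ) := by
      intro x y ξ η; push_cast; ring
    have hfV : ∑ v ∈ V, MvPolynomial.eval ![(m:ℂ), (n:ℂ)] (p v) * (eF v.1 ^ m * eF v.2 ^ n)
        = f m n := by
      rw [hfeq m n]
      apply Finset.sum_congr rfl
      intro v _
      rw [eF_pow, eF_pow, ← Complex.exp_add]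
      push_cast
      ring_nf
    have hfV' : ∑ v ∈ V', MvPolynomial.eval ![(m:ℂ), (n:ℂ)] (p' v) * (eF v.1 ^ m * eF v.2 ^ n)
        = f' m n := by
      rw [hfeq' m n]
      apply Finset.sum_congr rfl
      intro v _
      rw [eF_pow, eF_pow, ← Complex.exp_add]
      push_cast
      ring_nf
    rw [hfib, hP]
    simp only [map_sub, sub_mul]
    rw [Finset.sum_sub_distrib,
      hVpart V p Finset.subset_union_left, hVpart V' p' Finset.subset_union_right, hfV, hfV',
      hfg (m, n) hmn, hfg' (m, n) hmn, sub_self]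
  -- counting facts
  have hsum_t : ∑ x ∈ XF, t x ≤ 2 * N := by
    calc ∑ x ∈ XF, t x ≤ ∑ x ∈ XF, (W.filter (fun v => Prod.fst v = x)).card :=
        Finset.sum_le_sum fun x _ => Finset.card_image_le
      _ = W.card := (Finset.card_eq_sum_card_fiberwise
          (fun v hv => Finset.mem_image_of_mem Prod.fst hv)).symm
      _ ≤ V.card + V'.card := Finset.card_union_le _ _
      _ ≤ 2 * N := by omega
  have ht1 : ∀ x ∈ XF, 1 ≤ t x := by
    intro x hx
    obtain ⟨v, hv, rfl⟩ := Finset.mem_image.mp hx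
    have : v.2 ∈ ys v.1 :=
      Finset.mem_image_of_mem Prod.snd (Finset.mem_filter.mpr ⟨hv, rfl⟩)
    rw [ht]
    exact Finset.card_pos.mpr ⟨v.2, this⟩
  -- the resolution induction
  have resolve : ∀ (k : ℕ) (U : Finset ℝ), U ⊆ XF → U.card ≤ k →
      (∀ x ∈ XF, x ∉ U → ∀ m n : ℕ, C x m n = 0) → ∀ x ∈ XF, ∀ m n : ℕ, C x m n = 0 := by
    intro k
    induction k with
    | zero =>
      intro U hUsub hUcard hres x hx m n
      have hU : U = ∅ := Finset.card_eq_zero.mp (Nat.le_zero.mp hUcard)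
      exact hres x hx (by simp [hU]) m n
    | succ k IH =>
      intro U hUsub hUcard hres
      rcases Finset.eq_empty_or_nonempty U with rfl | hUne
      · intro x hx m n
        exact hres x hx (by simp) m n
      obtain ⟨x₀, hx₀U, hx₀min⟩ := Finset.exists_min_image U t hUne
      have ht₀1 : 1 ≤ t x₀ := ht1 x₀ (hUsub hx₀U)
      have ht₀2N : t x₀ ≤ 2 * N := by
        calc t x₀ ≤ ∑ x ∈ XF, t x :=
            Finset.single_le_sum (fun x _ => Nat.zero_le _) (hUsub hx₀U)
          _ ≤ 2 * N := hsum_t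
      set r := (t x₀ + 1) / 2 with hr
      have hr1 : 1 ≤ r := by omega
      have hrN : r ≤ N := by omega
      have htr : t x₀ ≤ 2 * r := by omega
      have htr' : 2 * r - 1 ≤ t x₀ := by omega
      have hur : U.card * (2 * r - 1) ≤ 2 * N := by
        calc U.card * (2 * r - 1) = U.card • (2 * r - 1) := by rw [smul_eq_mul]
          _ ≤ ∑ x ∈ U, t x := Finset.card_nsmul_le_sum U t _
            (fun x hx => le_trans htr' (hx₀min x hx))
          _ ≤ ∑ x ∈ XF, t x := Finset.sum_le_sum_of_subset hUsub
          _ ≤ 2 * N := hsum_t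
      have hub : U.card ≤ 2 * (N / r) := samp_arith hr1 hrN hur
      -- row step
      have hrow : ∀ n : ℕ, n ≤ 2 * r * D → ∀ x ∈ U, ∀ m : ℕ, C x m n = 0 := by
        intro n hn
        have hv : ∀ x ∈ U, Qrow x n = 0 := by
          apply lemA (U.card * D) U eF (fun _ => D) (fun x => Qrow x n)
            (eF_inj.mono (fun x hx => hXFIco x (hUsub hx)))
            (fun x _ => eF_ne_zero x)
            (fun x _ => hQrow_deg x n)
            (by rw [Finset.sum_const, smul_eq_mul])
          intro m hm
          have hm' : m ≤ 2 * (N / r) * D := by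
            have h1 : U.card * D ≤ 2 * (N / r) * D := Nat.mul_le_mul_right D hub
            omega
          have hmem : (m, n) ∈ sampSet N D := by
            rw [sampSet, Finset.mem_biUnion]
            exact ⟨r, Finset.mem_Icc.mpr ⟨hr1, hrN⟩, Finset.mem_product.mpr
              ⟨Finset.mem_range.mpr (by omega), Finset.mem_range.mpr (by omega)⟩⟩
          have h0 := hkey m n hmem
          rw [← Finset.sum_subset hUsub
            (fun x hx hxU => by rw [hres x hx hxU, zero_mul])] at h0
          rw [← h0]
          apply Finset.sum_congr rfl
          intro x _
          rw [hQrow_eval]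
        intro x hx m
        rw [← hQrow_eval, hv x hx]
        simp
      -- column step for x₀
      have hcol : ∀ m n : ℕ, C x₀ m n = 0 := by
        intro m n
        have hv : ∀ y ∈ ys x₀, toPolyB (P (x₀, y)) (m : ℂ) = 0 := by
          apply lemA (t x₀ * D) (ys x₀) eF (fun _ => D) (fun y => toPolyB (P (x₀, y)) (m : ℂ))
            (eF_inj.mono (fun y hy => hys_Ico x₀ y hy))
            (fun y _ => eF_ne_zero y)
            (fun y _ => hPdegB (x₀, y) (m : ℂ))
            (by rw [Finset.sum_const, smul_eq_mul, ht])
          intro n' hn'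
          have hn'' : n' ≤ 2 * r * D := by
            have : t x₀ * D ≤ 2 * r * D := Nat.mul_le_mul_right D htr
            omega
          have h0 := hrow n' hn'' x₀ hx₀U m
          rw [hC_col] at h0
          rw [← h0]
          apply Finset.sum_congr rfl
          intro y _
          rw [toPolyB_eval]
        rw [hC_col]
        apply Finset.sum_eq_zero
        intro y hy
        rw [← toPolyB_eval, hv y hy, Polynomial.eval_zero, zero_mul]
      -- recurse
      apply IH (U.erase x₀) (fun x hx => hUsub (Finset.mem_of_mem_erase hx))
        (by rw [Finset.card_erase_of_mem hx₀U]; omega)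
      intro x hx hxE m n
      by_cases hxx : x = x₀
      · subst hxx; exact hcol m n
      · by_cases hxU : x ∈ U
        · exact absurd (Finset.mem_erase.mpr ⟨hxx, hxU⟩) hxE
        · exact hres x hx hxU m n
  have hCall : ∀ x ∈ XF, ∀ m n : ℕ, C x m n = 0 :=
    resolve XF.card XF Finset.Subset.rfl le_rfl (fun x hx hxX => absurd hx hxX)
  -- extract that all difference coefficients are zero
  have hPzero : ∀ v ∈ W, P v = 0 := by
    intro v hv
    have hxXF : v.1 ∈ XF := Finset.mem_image_of_mem Prod.fst hv
    have hyys : v.2 ∈ ys v.1 :=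
      Finset.mem_image_of_mem Prod.snd (Finset.mem_filter.mpr ⟨hv, rfl⟩)
    have hB : ∀ m : ℕ, toPolyB (P v) (m : ℂ) = 0 := by
      intro m
      have hv2 : ∀ y ∈ ys v.1, toPolyB (P (v.1, y)) (m : ℂ) = 0 := by
        apply lemA (t v.1 * D) (ys v.1) eF (fun _ => D) (fun y => toPolyB (P (v.1, y)) (m : ℂ))
          (eF_inj.mono (fun y hy => hys_Ico v.1 y hy))
          (fun y _ => eF_ne_zero y)
          (fun y _ => hPdegB (v.1, y) (m : ℂ))
          (by rw [Finset.sum_const, smul_eq_mul, ht])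
        intro n' _
        have h0 := hCall v.1 hxXF m n'
        rw [hC_col] at h0
        rw [← h0]
        apply Finset.sum_congr rfl
        intro y _
        rw [toPolyB_eval]
      have := hv2 v.2 hyys
      rwa [Prod.mk.eta] at this
    have h1 : ∀ (m : ℕ) (b : ℂ), MvPolynomial.eval ![(m : ℂ), b] (P v) = 0 := by
      intro m b
      rw [← toPolyB_eval, hB m, Polynomial.eval_zero]
    have h2 : ∀ b : ℂ, toPolyA (P v) b = 0 := by
      intro b
      apply Polynomial.eq_zero_of_infinite_isRoot
      apply Set.infinite_of_injective_forall_mem (f := fun m : ℕ => (m : ℂ))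
        (fun a b h => by simpa using h)
      intro m
      show Polynomial.IsRoot _ _
      rw [Polynomial.IsRoot, toPolyA_eval, h1 m b]
    apply MvPolynomial.funext
    intro x
    have hx2 : (![x 0, x 1] : Fin 2 → ℂ) = x := by
      funext i; fin_cases i <;> rfl
    rw [map_zero, ← hx2, ← toPolyA_eval, h2 (x 1), Polynomial.eval_zero]
  -- conclude V = V' and p = p' on V
  have hVV' : V = V' := by
    apply Finset.Subset.antisymm
    · intro v hv
      by_contra hv'
      have := hPzero v (Finset.mem_union_left _ hv)
      rw [hP] at this
      simp only [if_pos hv, if_neg hv', sub_zero] at this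
      exact hpne v hv this
    · intro v hv
      by_contra hv'
      have := hPzero v (Finset.mem_union_right _ hv)
      rw [hP] at this
      simp only [if_pos hv, if_neg hv', zero_sub, neg_eq_zero] at this
      exact hpne' v hv this
  have hpp' : ∀ v ∈ V, p v = p' v := by
    intro v hv
    have hv' : v ∈ V' := hVV' ▸ hv
    have := hPzero v (Finset.mem_union_left _ hv)
    rw [hP] at this
    simp only [if_pos hv, if_pos hv'] at this
    exact sub_eq_zero.mp this
  funext ξ η
  rw [hfeq ξ η, hfeq' ξ η]
  exact Finset.sum_congr hVV' (fun v hv => by rw [hpp' v (hVV' ▸ hv)])
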